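/- Let ε be a left counit and set B₀:=ε(A). Then B₀ is a two-sided ideal of B, B₀ equals the linear span of B₀·B₀, the spans of s(B₀)A and t(B₀)A equal A, and B₀ is an essential ideal: if x∈B and xB₀=0 then x=0, and if B₀x=0 then x=0. -/
import Mathlib


open scoped TensorProduct

noncomputable section

/-- A multiplier of a non-unital complex algebra `A`: a pair `T = (L, R)` of ℂ-linear maps
`A → A` satisfying `L (a*b) = L a * b`, `R (a*b) = a * R b` and `R a * b = a * L b`.
We write `T a := L a` and `a T := R a`. -/
structure Mult (A : Type*) [NonUnitalRing A] [Module ℂ A]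
    [SMulCommClass ℂ A A] [IsScalarTower ℂ A A] where
  L : A →ₗ[ℂ] A
  R : A →ₗ[ℂ] A
  hL : ∀ a b : A, L (a * b) = L a * b
  hR : ∀ a b : A, R (a * b) = a * R b
  hC : ∀ a b : A, R a * b = a * L b

namespace Mult

variable {A : Type*} [NonUnitalRing A] [Module ℂ A] [SMulCommClass ℂ A A] [IsScalarTower ℂ A A]

/-- Multiplication of multipliers: `(L,R)·(L′,R′) = (L∘L′, R′∘R)`. -/
instance : Mul (Mult A) :=
  ⟨fun T U =>
    { L := T.L ∘ₗ U.L
      R := U.R ∘ₗ T.R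
      hL := fun a b => by simp [U.hL, T.hL]
      hR := fun a b => by simp [T.hR, U.hR]
      hC := fun a b => by simp [U.hC, T.hC] }⟩

instance : Add (Mult A) :=
  ⟨fun T U =>
    { L := T.L + U.L
      R := T.R + U.R
      hL := fun a b => by simp [T.hL, U.hL, add_mul]
      hR := fun a b => by simp [T.hR, U.hR, mul_add]
      hC := fun a b => by simp [T.hC, U.hC, add_mul, mul_add] }⟩

instance : SMul ℂ (Mult A) :=
  ⟨fun c T =>
    { L := c • T.L
      R := c • T.R
      hL := fun a b => by simp [T.hL, smul_mul_assoc]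
      hR := fun a b => by simp [T.hR, mul_smul_comm]
      hC := fun a b => by simp [T.hC, smul_mul_assoc, mul_smul_comm] }⟩

end Mult

section Maps

variable {A : Type*} [NonUnitalRing A] [Module ℂ A] [SMulCommClass ℂ A A] [IsScalarTower ℂ A A]

/-- `w ↦ w · (c ⊗ 1)` on `A ⊗ A`. -/
def rmul₁ (c : A) : A ⊗[ℂ] A →ₗ[ℂ] A ⊗[ℂ] A :=
  TensorProduct.map (LinearMap.mulRight ℂ c) LinearMap.id

/-- `w ↦ w · (1 ⊗ c)` on `A ⊗ A`. -/
def rmul₂ (c : A) : A ⊗[ℂ] A →ₗ[ℂ] A ⊗[ℂ] A :=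
  TensorProduct.map LinearMap.id (LinearMap.mulRight ℂ c)

/-- `w ↦ (c ⊗ 1) · w` on `A ⊗ A`. -/
def lmul₁ (c : A) : A ⊗[ℂ] A →ₗ[ℂ] A ⊗[ℂ] A :=
  TensorProduct.map (LinearMap.mulLeft ℂ c) LinearMap.id

/-- `w ↦ (1 ⊗ c) · w` on `A ⊗ A`. -/
def lmul₂ (c : A) : A ⊗[ℂ] A →ₗ[ℂ] A ⊗[ℂ] A :=
  TensorProduct.map LinearMap.id (LinearMap.mulLeft ℂ c)

/-- `b ↦ a ⊗ b`. -/
def tmulL (a : A) : A →ₗ[ℂ] A ⊗[ℂ] A := TensorProduct.mk ℂ A A a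

/-- `a ↦ a ⊗ b`. -/
def tmulR (b : A) : A →ₗ[ℂ] A ⊗[ℂ] A := (TensorProduct.mk ℂ A A).flip b

/-- `(x ⊗ y) ⊗ v ↦ x ⊗ (y * v)`. -/
def mulIn23 : (A ⊗[ℂ] A) ⊗[ℂ] A →ₗ[ℂ] A ⊗[ℂ] A :=
  TensorProduct.map LinearMap.id (LinearMap.mul' ℂ A) ∘ₗ
    (TensorProduct.assoc ℂ A A A).toLinearMap

/-- `(x ⊗ y) ⊗ v ↦ x ⊗ (v * y)`. -/
def mulIn23' : (A ⊗[ℂ] A) ⊗[ℂ] A →ₗ[ℂ] A ⊗[ℂ] A :=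
  TensorProduct.map LinearMap.id
      (LinearMap.mul' ℂ A ∘ₗ (TensorProduct.comm ℂ A A).toLinearMap) ∘ₗ
    (TensorProduct.assoc ℂ A A A).toLinearMap

/-- `u ⊗ (x ⊗ y) ↦ (x * u) ⊗ y`. -/
def mulIn1 : A ⊗[ℂ] (A ⊗[ℂ] A) →ₗ[ℂ] A ⊗[ℂ] A :=
  TensorProduct.map (LinearMap.mul' ℂ A) LinearMap.id ∘ₗ
    (TensorProduct.assoc ℂ A A A).symm.toLinearMap ∘ₗ
    (TensorProduct.leftComm ℂ A A A).toLinearMap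

/-- `u ⊗ (x ⊗ y) ↦ (u * x) ⊗ y`. -/
def mulIn1' : A ⊗[ℂ] (A ⊗[ℂ] A) →ₗ[ℂ] A ⊗[ℂ] A :=
  TensorProduct.map (LinearMap.mul' ℂ A ∘ₗ (TensorProduct.comm ℂ A A).toLinearMap)
      LinearMap.id ∘ₗ
    (TensorProduct.assoc ℂ A A A).symm.toLinearMap ∘ₗ
    (TensorProduct.leftComm ℂ A A A).toLinearMap

end Maps

/-- The basic data for a left multiplier bialgebroid: non-unital complex algebras `A`, `B`,
an algebra homomorphism `s : B → M(A)`, an algebra anti-homomorphism `t : B → M(A)` with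
commuting images; `A` is idempotent and non-degenerate, `s`, `t` are faithful and the spans
of `s(B)A` and `t(B)A` equal `A`. -/
structure BaseData (A B : Type*) [NonUnitalRing A] [Module ℂ A] [SMulCommClass ℂ A A]
    [IsScalarTower ℂ A A] [NonUnitalRing B] [Module ℂ B] [SMulCommClass ℂ B B]
    [IsScalarTower ℂ B B] where
  s : B → Mult A
  t : B → Mult A
  s_add : ∀ x y : B, s (x + y) = s x + s y
  s_smul : ∀ (c : ℂ) (x : B), s (c • x) = c • s x
  s_mul : ∀ x y : B, s (x * y) = s x * s y
  t_add : ∀ x y : B, t (x + y) = t x + t y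
  t_smul : ∀ (c : ℂ) (x : B), t (c • x) = c • t x
  t_mul : ∀ x y : B, t (x * y) = t y * t x
  st_comm : ∀ x y : B, s x * t y = t y * s x
  A_nd : ∀ a : A, (∀ b : A, a * b = 0) → a = 0
  A_idem : Submodule.span ℂ {z : A | ∃ a b : A, z = a * b} = ⊤
  s_faithful : ∀ x : B, (∀ a : A, (s x).L a = 0) → x = 0
  t_faithful : ∀ x : B, (∀ a : A, (t x).L a = 0) → x = 0
  s_span : Submodule.span ℂ {z : A | ∃ (x : B) (a : A), z = (s x).L a} = ⊤
  t_span : Submodule.span ℂ {z : A | ∃ (x : B) (a : A), z = (t x).L a} = ⊤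

section LeftBgd

variable {A B : Type*}
  [NonUnitalRing A] [Module ℂ A] [SMulCommClass ℂ A A] [IsScalarTower ℂ A A]
  [NonUnitalRing B] [Module ℂ B] [SMulCommClass ℂ B B] [IsScalarTower ℂ B B]

/-- The subspace of `A ⊗ A` by which one quotients to obtain `A ⊗̄ A`:
the span of all `s(x)a ⊗ b − a ⊗ t(x)b`. -/
def BaseData.relB (D : BaseData A B) : Submodule ℂ (A ⊗[ℂ] A) :=
  Submodule.span ℂ
    {z : A ⊗[ℂ] A | ∃ (x : B) (a b : A), z = (D.s x).L a ⊗ₜ[ℂ] b - a ⊗ₜ[ℂ] (D.t x).L b}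

/-- Non-degeneracy of `A ⊗̄ A` as a right module over `A ⊗ 1` and over `1 ⊗ A`,
formulated via representatives. -/
def condA3 (D : BaseData A B) : Prop :=
  (∀ u : A ⊗[ℂ] A, (∀ c : A, rmul₁ c u ∈ D.relB) → u ∈ D.relB) ∧
  (∀ u : A ⊗[ℂ] A, (∀ c : A, rmul₂ c u ∈ D.relB) → u ∈ D.relB)

/-- (L1): `T̃λ(s(x)a⊗b) = T̃λ(a⊗b)(1⊗t(x))` and `T̃ρ(a⊗t(y)b) = T̃ρ(a⊗b)(s(y)⊗1)`. -/
def condL1 (D : BaseData A B) (Tl Tr : A ⊗[ℂ] A →ₗ[ℂ] A ⊗[ℂ] A) : Prop :=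
  (∀ (x : B) (a b : A),
      Tl ((D.s x).L a ⊗ₜ[ℂ] b) -
        TensorProduct.map LinearMap.id (D.t x).R (Tl (a ⊗ₜ[ℂ] b)) ∈ D.relB) ∧
  (∀ (y : B) (a b : A),
      Tr (a ⊗ₜ[ℂ] (D.t y).L b) -
        TensorProduct.map (D.s y).R LinearMap.id (Tr (a ⊗ₜ[ℂ] b)) ∈ D.relB)

/-- (L2λ): `T̃λ(a ⊗ s(x)t(y)b s(x′)t(y′)) = (t(y)⊗s(x))·T̃λ(t(y′)a⊗b)·(1⊗s(x′))`. -/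
def condL2lam (D : BaseData A B) (Tl : A ⊗[ℂ] A →ₗ[ℂ] A ⊗[ℂ] A) : Prop :=
  ∀ (a b : A) (x x' y y' : B),
    Tl (a ⊗ₜ[ℂ] ((D.s x).L ((D.t y).L ((D.t y').R ((D.s x').R b))))) -
      TensorProduct.map (D.t y).L (D.s x).L
        (TensorProduct.map LinearMap.id (D.s x').R (Tl ((D.t y').L a ⊗ₜ[ℂ] b))) ∈ D.relB

/-- (L2ρ): `T̃ρ(s(x)t(y)a s(x′)t(y′) ⊗ b) = (t(y)⊗s(x))·T̃ρ(a⊗s(x′)b)·(t(y′)⊗1)`. -/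
def condL2rho (D : BaseData A B) (Tr : A ⊗[ℂ] A →ₗ[ℂ] A ⊗[ℂ] A) : Prop :=
  ∀ (a b : A) (x x' y y' : B),
    Tr (((D.s x).L ((D.t y).L ((D.t y').R ((D.s x').R a)))) ⊗ₜ[ℂ] b) -
      TensorProduct.map (D.t y).L (D.s x).L
        (TensorProduct.map (D.t y').R LinearMap.id (Tr (a ⊗ₜ[ℂ] (D.s x').L b))) ∈ D.relB

/-- (L3): `T̃λ(a⊗b)·(1⊗c) = T̃ρ(b⊗c)·(a⊗1)`. -/
def condL3 (D : BaseData A B) (Tl Tr : A ⊗[ℂ] A →ₗ[ℂ] A ⊗[ℂ] A) : Prop :=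
  ∀ a b c : A, rmul₂ c (Tl (a ⊗ₜ[ℂ] b)) - rmul₁ a (Tr (b ⊗ₜ[ℂ] c)) ∈ D.relB

/-- (L4): `T̃λ(ba⊗c) = T̃λ(b⊗c)·(a⊗1)` and `T̃ρ(a⊗bc) = T̃ρ(a⊗b)·(1⊗c)`. -/
def condL4 (D : BaseData A B) (Tl Tr : A ⊗[ℂ] A →ₗ[ℂ] A ⊗[ℂ] A) : Prop :=
  (∀ a b c : A, Tl ((b * a) ⊗ₜ[ℂ] c) - rmul₁ a (Tl (b ⊗ₜ[ℂ] c)) ∈ D.relB) ∧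
  (∀ a b c : A, Tr (a ⊗ₜ[ℂ] (b * c)) - rmul₂ c (Tr (a ⊗ₜ[ℂ] b)) ∈ D.relB)

/-- (L5λ): whenever `u = Σⱼ uⱼ⊗vⱼ` represents `T̃λ(a⊗c)`, one has
`T̃λ(a ⊗ bc) = Σⱼ T̃λ(uⱼ⊗b)·(1⊗vⱼ)`. -/
def condL5lam (D : BaseData A B) (Tl : A ⊗[ℂ] A →ₗ[ℂ] A ⊗[ℂ] A) : Prop :=
  ∀ (a b c : A) (u : A ⊗[ℂ] A), u - Tl (a ⊗ₜ[ℂ] c) ∈ D.relB →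
    Tl (a ⊗ₜ[ℂ] (b * c)) -
      mulIn23 (TensorProduct.map (Tl ∘ₗ tmulR b) LinearMap.id u) ∈ D.relB

/-- (L5ρ): whenever `u = Σⱼ uⱼ⊗vⱼ` represents `T̃ρ(b⊗c)`, one has
`T̃ρ(ab ⊗ c) = Σⱼ T̃ρ(a⊗vⱼ)·(uⱼ⊗1)`. -/
def condL5rho (D : BaseData A B) (Tr : A ⊗[ℂ] A →ₗ[ℂ] A ⊗[ℂ] A) : Prop :=
  ∀ (a b c : A) (u : A ⊗[ℂ] A), u - Tr (b ⊗ₜ[ℂ] c) ∈ D.relB →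
    Tr ((a * b) ⊗ₜ[ℂ] c) -
      mulIn1 (TensorProduct.map LinearMap.id (Tr ∘ₗ tmulL a) u) ∈ D.relB

/-- The subspace of `A ⊗ A ⊗ A` by which one quotients to obtain the two-sided balanced
triple tensor product: the span of all `s(x)a⊗b⊗c − a⊗t(x)b⊗c` and
`a⊗s(x)b⊗c − a⊗b⊗t(x)c`. -/
def BaseData.span₃ (D : BaseData A B) : Submodule ℂ (A ⊗[ℂ] (A ⊗[ℂ] A)) :=
  Submodule.span ℂ
    ({w : A ⊗[ℂ] (A ⊗[ℂ] A) | ∃ (x : B) (a b c : A),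
        w = (D.s x).L a ⊗ₜ[ℂ] (b ⊗ₜ[ℂ] c) - a ⊗ₜ[ℂ] ((D.t x).L b ⊗ₜ[ℂ] c)} ∪
     {w : A ⊗[ℂ] (A ⊗[ℂ] A) | ∃ (x : B) (a b c : A),
        w = a ⊗ₜ[ℂ] ((D.s x).L b ⊗ₜ[ℂ] c) - a ⊗ₜ[ℂ] (b ⊗ₜ[ℂ] (D.t x).L c)})

/-- (L6): mixed coassociativity; whenever `u` represents `T̃ρ(b⊗c)` and `p` represents
`T̃λ(a⊗b)`, the elements `Σⱼ T̃λ(a⊗uⱼ)⊗vⱼ` and `Σₖ pₖ⊗T̃ρ(qₖ⊗c)` agree in the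
balanced triple tensor product. -/
def condL6 (D : BaseData A B) (Tl Tr : A ⊗[ℂ] A →ₗ[ℂ] A ⊗[ℂ] A) : Prop :=
  ∀ (a b c : A) (u p : A ⊗[ℂ] A), u - Tr (b ⊗ₜ[ℂ] c) ∈ D.relB →
    p - Tl (a ⊗ₜ[ℂ] b) ∈ D.relB →
    (TensorProduct.assoc ℂ A A A)
        (TensorProduct.map (Tl ∘ₗ tmulL a) LinearMap.id u) -
      TensorProduct.map LinearMap.id (Tr ∘ₗ tmulR c) p ∈ D.span₃

/-- A left multiplier bialgebroid, presented by its canonical maps. -/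
def IsLeftBialgebroid (D : BaseData A B) (Tl Tr : A ⊗[ℂ] A →ₗ[ℂ] A ⊗[ℂ] A) : Prop :=
  condA3 D ∧ condL1 D Tl Tr ∧ condL2lam D Tl ∧ condL2rho D Tr ∧ condL3 D Tl Tr ∧
    condL4 D Tl Tr ∧ condL5lam D Tl ∧ condL5rho D Tr ∧ condL6 D Tl Tr

/-- A left counit for a left multiplier bialgebroid. -/
def IsLeftCounit (D : BaseData A B) (Tl Tr : A ⊗[ℂ] A →ₗ[ℂ] A ⊗[ℂ] A)
    (ε : A →ₗ[ℂ] B) : Prop :=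
  (∀ (x : B) (a : A), ε ((D.s x).L a) = x * ε a) ∧
  (∀ (y : B) (a : A), ε ((D.t y).L a) = ε a * y) ∧
  (∀ (a b : A) (n : ℕ) (uu vv : Fin n → A),
      (∑ j, uu j ⊗ₜ[ℂ] vv j) - Tr (a ⊗ₜ[ℂ] b) ∈ D.relB →
      ∑ j, (D.t (ε (uu j))).L (vv j) = a * b) ∧
  (∀ (a b : A) (n : ℕ) (uu vv : Fin n → A),
      (∑ j, uu j ⊗ₜ[ℂ] vv j) - Tl (a ⊗ₜ[ℂ] b) ∈ D.relB →
      ∑ j, (D.s (ε (vv j))).L (uu j) = a * b)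

/-- The domain relation for the canonical map `Tλ`: the span of all
`t(x)a ⊗ b − a ⊗ b·t(x)`. -/
def relLam (D : BaseData A B) : Submodule ℂ (A ⊗[ℂ] A) :=
  Submodule.span ℂ
    {z : A ⊗[ℂ] A | ∃ (x : B) (a b : A), z = (D.t x).L a ⊗ₜ[ℂ] b - a ⊗ₜ[ℂ] (D.t x).R b}

/-- The domain relation for the canonical map `Tρ`: the span of all
`a·s(x) ⊗ b − a ⊗ s(x)b`. -/
def relRho (D : BaseData A B) : Submodule ℂ (A ⊗[ℂ] A) :=
  Submodule.span ℂ
    {z : A ⊗[ℂ] A | ∃ (x : B) (a b : A), z = (D.s x).R a ⊗ₜ[ℂ] b - a ⊗ₜ[ℂ] (D.s x).L b}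

/-- The left ideal `Iˢ ⊆ B`. -/
def IdlS (D : BaseData A B) : Submodule ℂ B :=
  Submodule.span ℂ
    {z : B | ∃ φ : A →ₗ[ℂ] B, (∀ (x : B) (a : A), φ ((D.s x).L a) = x * φ a) ∧ ∃ a, z = φ a}

/-- The right ideal `Iᵗ ⊆ B`. -/
def IdlT (D : BaseData A B) : Submodule ℂ B :=
  Submodule.span ℂ
    {z : B | ∃ ψ : A →ₗ[ℂ] B, (∀ (x : B) (a : A), ψ ((D.t x).L a) = ψ a * x) ∧ ∃ a, z = ψ a}

/-- The elements witnessing left-fullness. -/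
def leftFullSet (D : BaseData A B) (Tr : A ⊗[ℂ] A →ₗ[ℂ] A ⊗[ℂ] A) : Set A :=
  {z : A | ∃ ψ : A →ₗ[ℂ] B, (∀ (x : B) (a : A), ψ ((D.t x).L a) = ψ a * x) ∧
    ∃ (a b : A) (n : ℕ) (uu vv : Fin n → A),
      (∑ j, uu j ⊗ₜ[ℂ] vv j) - Tr (a ⊗ₜ[ℂ] b) ∈ D.relB ∧
      z = ∑ j, (D.s (ψ (vv j))).L (uu j)}

/-- The elements witnessing right-fullness. -/
def rightFullSet (D : BaseData A B) (Tl : A ⊗[ℂ] A →ₗ[ℂ] A ⊗[ℂ] A) : Set A :=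
  {z : A | ∃ φ : A →ₗ[ℂ] B, (∀ (x : B) (a : A), φ ((D.s x).L a) = x * φ a) ∧
    ∃ (a b : A) (n : ℕ) (uu vv : Fin n → A),
      (∑ j, uu j ⊗ₜ[ℂ] vv j) - Tl (a ⊗ₜ[ℂ] b) ∈ D.relB ∧
      z = ∑ j, (D.t (φ (uu j))).L (vv j)}

lemma exists_rep (w : A ⊗[ℂ] A) : ∃ (n : ℕ) (uu vv : Fin n → A),
    w = ∑ j, uu j ⊗ₜ[ℂ] vv j := by
  obtain ⟨S, hS⟩ := TensorProduct.exists_finset w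
  refine ⟨S.card, fun j => (S.equivFin.symm j : A × A).1,
    fun j => (S.equivFin.symm j : A × A).2, ?_⟩
  rw [hS, ← Finset.sum_attach S (fun i => i.1 ⊗ₜ[ℂ] i.2)]
  exact (Equiv.sum_comp S.equivFin.symm _).symm

lemma mult_smul_L (c : ℂ) (T : Mult A) : (c • T).L = c • T.L := rfl

lemma mult_mul_L (T U : Mult A) : (T * U).L = T.L ∘ₗ U.L := rfl

lemma sL_zero (D : BaseData A B) (a : A) : (D.s 0).L a = 0 := by
  have h : D.s (0 : B) = (0 : ℂ) • D.s 0 := by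
    rw [← D.s_smul]; norm_num
  rw [h, mult_smul_L]; simp

lemma tL_zero (D : BaseData A B) (a : A) : (D.t 0).L a = 0 := by
  have h : D.t (0 : B) = (0 : ℂ) • D.t 0 := by
    rw [← D.t_smul]; norm_num
  rw [h, mult_smul_L]; simp

lemma sL_mul (D : BaseData A B) (x y : B) (a : A) :
    (D.s (x * y)).L a = (D.s x).L ((D.s y).L a) := by
  rw [D.s_mul, mult_mul_L]; rfl

lemma tL_mul (D : BaseData A B) (x y : B) (a : A) :
    (D.t (x * y)).L a = (D.t y).L ((D.t x).L a) := by
  rw [D.t_mul, mult_mul_L]; rfl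

/-- the image `B₀ = ε(A)` of a left counit is an idempotent, essential
two-sided ideal of `B` with `s(B₀)A = A = t(B₀)A`. -/
theorem stmt8 (D : BaseData A B) (Tl Tr : A ⊗[ℂ] A →ₗ[ℂ] A ⊗[ℂ] A)
    (h : IsLeftBialgebroid D Tl Tr)
    (ε : A →ₗ[ℂ] B) (hε : IsLeftCounit D Tl Tr ε) :
    (∀ x : B, ∀ b ∈ LinearMap.range ε, x * b ∈ LinearMap.range ε ∧
      b * x ∈ LinearMap.range ε) ∧
    (LinearMap.range ε = Submodule.span ℂ
      {z : B | ∃ b c : B, b ∈ LinearMap.range ε ∧ c ∈ LinearMap.range ε ∧ z = b * c}) ∧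
    Submodule.span ℂ {z : A | ∃ (x : B) (a : A),
      x ∈ LinearMap.range ε ∧ z = (D.s x).L a} = ⊤ ∧
    Submodule.span ℂ {z : A | ∃ (x : B) (a : A),
      x ∈ LinearMap.range ε ∧ z = (D.t x).L a} = ⊤ ∧
    (∀ x : B, (∀ b ∈ LinearMap.range ε, x * b = 0) → x = 0) ∧
    (∀ x : B, (∀ b ∈ LinearMap.range ε, b * x = 0) → x = 0) := by
  obtain ⟨hεs, hεt, hrho, hlam⟩ := hε
  -- representations of Tρ and Tλ together with the counit identities
  have reprho : ∀ a b : A, ∃ (n : ℕ) (uu vv : Fin n → A),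
      Tr (a ⊗ₜ[ℂ] b) = ∑ j, uu j ⊗ₜ[ℂ] vv j ∧
      ∑ j, (D.t (ε (uu j))).L (vv j) = a * b := by
    intro a b
    obtain ⟨n, uu, vv, hrep⟩ := exists_rep (Tr (a ⊗ₜ[ℂ] b))
    exact ⟨n, uu, vv, hrep, hrho a b n uu vv (by rw [← hrep, sub_self]; exact zero_mem _)⟩
  have replam : ∀ a b : A, ∃ (n : ℕ) (uu vv : Fin n → A),
      Tl (a ⊗ₜ[ℂ] b) = ∑ j, uu j ⊗ₜ[ℂ] vv j ∧
      ∑ j, (D.s (ε (vv j))).L (uu j) = a * b := by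
    intro a b
    obtain ⟨n, uu, vv, hrep⟩ := exists_rep (Tl (a ⊗ₜ[ℂ] b))
    exact ⟨n, uu, vv, hrep, hlam a b n uu vv (by rw [← hrep, sub_self]; exact zero_mem _)⟩
  refine ⟨?_, ?_, ?_, ?_, ?_, ?_⟩
  · -- two-sided ideal
    rintro x b ⟨a, rfl⟩
    exact ⟨⟨(D.s x).L a, hεs x a⟩, ⟨(D.t x).L a, hεt x a⟩⟩
  · -- idempotency
    apply le_antisymm
    · rintro _ ⟨a, rfl⟩
      have hmem : (⊤ : Submodule ℂ A) ≤ (Submodule.span ℂ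
          {z : B | ∃ b c : B, b ∈ LinearMap.range ε ∧ c ∈ LinearMap.range ε ∧
            z = b * c}).comap ε := by
        rw [← D.A_idem]
        apply Submodule.span_le.2
        rintro _ ⟨u, v, rfl⟩
        obtain ⟨n, uu, vv, _, hsum⟩ := reprho u v
        rw [SetLike.mem_coe, Submodule.mem_comap, ← hsum, map_sum]
        refine Submodule.sum_mem _ fun j _ => ?_
        rw [hεt (ε (uu j)) (vv j)]
        exact Submodule.subset_span ⟨ε (vv j), ε (uu j), ⟨vv j, rfl⟩, ⟨uu j, rfl⟩, rfl⟩
      exact hmem trivial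
    · apply Submodule.span_le.2
      rintro _ ⟨b, c, ⟨a1, rfl⟩, ⟨a2, rfl⟩, rfl⟩
      exact ⟨(D.t (ε a2)).L a1, hεt (ε a2) a1⟩
  · -- s(B₀)A spans A
    refine le_antisymm le_top ?_
    rw [← D.A_idem]
    apply Submodule.span_le.2
    rintro _ ⟨u, v, rfl⟩
    obtain ⟨n, uu, vv, _, hsum⟩ := replam u v
    rw [← hsum]
    refine Submodule.sum_mem _ fun j _ => ?_
    exact Submodule.subset_span ⟨ε (vv j), uu j, ⟨vv j, rfl⟩, rfl⟩
  · -- t(B₀)A spans A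
    refine le_antisymm le_top ?_
    rw [← D.A_idem]
    apply Submodule.span_le.2
    rintro _ ⟨u, v, rfl⟩
    obtain ⟨n, uu, vv, _, hsum⟩ := reprho u v
    rw [← hsum]
    refine Submodule.sum_mem _ fun j _ => ?_
    exact Submodule.subset_span ⟨ε (uu j), vv j, ⟨uu j, rfl⟩, rfl⟩
  · -- essentiality on the left
    intro x hx
    apply D.s_faithful
    have key : ∀ u v : A, (D.s x).L (u * v) = 0 := by
      intro u v
      obtain ⟨n, uu, vv, _, hsum⟩ := replam u v
      rw [← hsum, map_sum]
      refine Finset.sum_eq_zero fun j _ => ?_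
      rw [← sL_mul, hx (ε (vv j)) ⟨vv j, rfl⟩, sL_zero]
    have hle : Submodule.span ℂ {z : A | ∃ a b : A, z = a * b} ≤
        LinearMap.ker (D.s x).L := by
      apply Submodule.span_le.2
      rintro _ ⟨a, b, rfl⟩
      exact key a b
    rw [D.A_idem, top_le_iff] at hle
    intro a
    exact LinearMap.mem_ker.1 (hle ▸ Submodule.mem_top)
  · -- essentiality on the right
    intro x hx
    apply D.t_faithful
    have key : ∀ u v : A, (D.t x).L (u * v) = 0 := by
      intro u v
      obtain ⟨n, uu, vv, _, hsum⟩ := reprho u v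
      rw [← hsum, map_sum]
      refine Finset.sum_eq_zero fun j _ => ?_
      rw [← tL_mul, hx (ε (uu j)) ⟨uu j, rfl⟩, tL_zero]
    have hle : Submodule.span ℂ {z : A | ∃ a b : A, z = a * b} ≤
        LinearMap.ker (D.t x).L := by
      apply Submodule.span_le.2
      rintro _ ⟨a, b, rfl⟩
      exact key a b
    rw [D.A_idem, top_le_iff] at hle
    intro a
    exact LinearMap.mem_ker.1 (hle ▸ Submodule.mem_top)

end LeftBgd
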